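/- Let s ∈ C¹_FF([0,1]) with ‖s'‖₁ > 0 and let t₀, t₁, …, t_n ∈ C¹_FF([0,1]) with ‖t_j'‖₁ > 0 for all j, such that s ∼ t₀ (i.e., s∘g₁ = t₀∘g₂ for some g₁,g₂ ∈ 𝒢). Then d_T(s,t₀) = 0 = min_{0 ≤ j ≤ n} d_T(s,t_j); i.e., t₀ attains the minimum of d_T(s,·) over the training samples, so the class of s belongs to the classes of the minimizers of d_T(s,·). -/

import Mathlib

open Set MeasureTheory
open Topology Filter

/-- `g` is piecewise-C¹ on `[0,1]`: continuous, differentiable except at finitely many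
points, with derivative continuous off that finite exceptional set. -/
def PiecewiseC1 (g : ℝ → ℝ) : Prop :=
  ContinuousOn g (Set.Icc 0 1) ∧
  ∃ S : Finset ℝ,
    (∀ x ∈ Set.Icc (0:ℝ) 1 \ S, DifferentiableAt ℝ g x) ∧
    ContinuousOn (deriv g) (Set.Icc 0 1 \ S)

/-- `g` has finitely many flat regions: the zero set of `g'` in `[0,1]` has finitely many
connected components. -/
def FiniteFlats (g : ℝ → ℝ) : Prop :=
  {C : Set ℝ | ∃ x ∈ {y ∈ Set.Icc (0:ℝ) 1 | deriv g y = 0},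
      C = connectedComponentIn {y ∈ Set.Icc (0:ℝ) 1 | deriv g y = 0} x}.Finite

/-- The class C¹_FF([0,1]). -/
def C1FF (g : ℝ → ℝ) : Prop := PiecewiseC1 g ∧ FiniteFlats g

/-- The set 𝒢 of admissible time warps: C¹_FF, non-decreasing on `[0,1]`,
with `g 0 = 0` and `g 1 = 1`. -/
def InG (g : ℝ → ℝ) : Prop :=
  C1FF g ∧ MonotoneOn g (Set.Icc 0 1) ∧ g 0 = 0 ∧ g 1 = 1

/-- The warping relation: `s ∼ φ` iff `s ∘ g₁ = φ ∘ g₂` on `[0,1]` for some `g₁, g₂ ∈ 𝒢`. -/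
def WarpRel (s φ : ℝ → ℝ) : Prop :=
  ∃ g₁ g₂ : ℝ → ℝ, InG g₁ ∧ InG g₂ ∧ ∀ t ∈ Set.Icc (0:ℝ) 1, s (g₁ t) = φ (g₂ t)

/-- Generalized inverse of `F : [a,b] → ℝ` : `F†(y) = inf {x ∈ [a,b] | F x > y}`,
with `inf ∅ = b` (implemented by adjoining `{b}`). -/
noncomputable def genInv (a b : ℝ) (F : ℝ → ℝ) (y : ℝ) : ℝ :=
  sInf ({x ∈ Set.Icc a b | y < F x} ∪ {b})

/-- `‖f'‖₁ = ∫₀¹ |f'(x)| dx`. -/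
noncomputable def normD1 (f : ℝ → ℝ) : ℝ := ∫ x in (0:ℝ)..1, |deriv f x|

/-- CDF of the normalized density `|f'| / ‖f'‖₁`. -/
noncomputable def cdfOf (f : ℝ → ℝ) (t : ℝ) : ℝ :=
  (normD1 f)⁻¹ * ∫ x in (0:ℝ)..t, |deriv f x|

/-- The optimal transport map `g = F_φ† ∘ F_s` between `|s'|/‖s'‖₁` and `|φ'|/‖φ'‖₁`. -/
noncomputable def transportMap (s φ : ℝ → ℝ) (x : ℝ) : ℝ :=
  genInv 0 1 (cdfOf φ) (cdfOf s x)

/-- The transport divergence `d_T`. -/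
noncomputable def dT (s φ : ℝ → ℝ) : ℝ :=
  Real.sqrt (∫ x in (0:ℝ)..1,
    |s x - φ (transportMap s φ x)| ^ 2 * Real.sqrt (deriv (transportMap s φ) x))


lemma monoAux (K : Finset ℝ) :
    ∀ (a b : ℝ) (f : ℝ → ℝ), ContinuousOn f (Icc a b) →
      (∀ x ∈ Ioo a b \ (K : Set ℝ), ∃ d, 0 ≤ d ∧ HasDerivAt f d x) →
      MonotoneOn f (Icc a b) := by
  classical
  induction K using Finset.induction_on with
  | empty =>
    intro a b f hc hd
    apply monotoneOn_of_deriv_nonneg (convex_Icc a b) hc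
    · intro x hx
      rw [interior_Icc] at hx
      obtain ⟨d, _, hdd⟩ := hd x ⟨hx, by simp⟩
      exact hdd.differentiableAt.differentiableWithinAt
    · intro x hx
      rw [interior_Icc] at hx
      obtain ⟨d, hd0, hdd⟩ := hd x ⟨hx, by simp⟩
      rw [hdd.deriv]; exact hd0
  | @insert c K hcK ih =>
    intro a b f hc hd
    by_cases hcab : c ∈ Ioo a b
    · have h1 : MonotoneOn f (Icc a c) := by
        apply ih a c f (hc.mono (Icc_subset_Icc le_rfl hcab.2.le))
        intro x hx
        refine hd x ⟨⟨hx.1.1, hx.1.2.trans hcab.2⟩, ?_⟩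
        simp only [Finset.coe_insert, mem_insert_iff]
        push_neg
        exact ⟨ne_of_lt hx.1.2, hx.2⟩
      have h2 : MonotoneOn f (Icc c b) := by
        apply ih c b f (hc.mono (Icc_subset_Icc hcab.1.le le_rfl))
        intro x hx
        refine hd x ⟨⟨hcab.1.trans hx.1.1, hx.1.2⟩, ?_⟩
        simp only [Finset.coe_insert, mem_insert_iff]
        push_neg
        exact ⟨ne_of_gt hx.1.1, hx.2⟩
      intro x hx y hy hxy
      rcases le_total x c with h | h
      · rcases le_total y c with h' | h'
        · exact h1 ⟨hx.1, h⟩ ⟨hy.1, h'⟩ hxy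
        · exact (h1 ⟨hx.1, h⟩ ⟨hcab.1.le, le_rfl⟩ h).trans
            (h2 ⟨le_rfl, hcab.2.le⟩ ⟨h', hy.2⟩ h')
      · exact h2 ⟨h, hx.2⟩ ⟨h.trans hxy, hy.2⟩ hxy
    · apply ih a b f hc
      intro x hx
      refine hd x ⟨hx.1, ?_⟩
      simp only [Finset.coe_insert, mem_insert_iff]
      push_neg
      exact ⟨fun h => hcab (h ▸ hx.1), hx.2⟩

lemma constAux {a b : ℝ} {f : ℝ → ℝ} (K : Finset ℝ) (hab : a ≤ b)
    (hc : ContinuousOn f (Icc a b))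
    (hd : ∀ x ∈ Ioo a b \ (K : Set ℝ), HasDerivAt f 0 x) :
    ∀ x ∈ Icc a b, f x = f a := by
  have hmono := monoAux K a b f hc (fun x hx => ⟨0, le_rfl, hd x hx⟩)
  have hanti := monoAux K a b (fun y => -f y) hc.neg
      (fun x hx => ⟨0, le_rfl, by have := (hd x hx).neg; rw [neg_zero] at this; exact this⟩)
  intro x hx
  have ha : a ∈ Icc a b := ⟨le_rfl, hab⟩
  have h1 := hmono ha hx hx.1
  have h2 := hanti ha hx hx.1
  simp only [neg_le_neg_iff] at h2
  linarith

lemma intervalIntegrable_of_normD1_pos {f : ℝ → ℝ} (h : 0 < normD1 f) :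
    IntervalIntegrable (fun x => |deriv f x|) volume 0 1 := by
  by_contra hI
  rw [normD1, intervalIntegral.integral_undef hI] at h
  exact lt_irrefl 0 h

lemma normD1_nonneg (f : ℝ → ℝ) : 0 ≤ normD1 f :=
  intervalIntegral.integral_nonneg zero_le_one (fun x _ => abs_nonneg _)

lemma sub_uIcc {a b : ℝ} (ha : a ∈ Icc (0:ℝ) 1) (hb : b ∈ Icc (0:ℝ) 1) :
    uIcc a b ⊆ uIcc (0:ℝ) 1 := by
  rw [uIcc_of_le zero_le_one]
  exact uIcc_subset_Icc ha hb

lemma cdf_sub {f : ℝ → ℝ} (hI : IntervalIntegrable (fun x => |deriv f x|) volume 0 1)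
    {a b : ℝ} (ha : a ∈ Icc (0:ℝ) 1) (hb : b ∈ Icc (0:ℝ) 1) :
    cdfOf f b - cdfOf f a = (normD1 f)⁻¹ * ∫ x in a..b, |deriv f x| := by
  unfold cdfOf
  rw [← mul_sub]
  congr 1
  exact intervalIntegral.integral_interval_sub_left
    (hI.mono_set (sub_uIcc ⟨le_rfl, zero_le_one⟩ hb))
    (hI.mono_set (sub_uIcc ⟨le_rfl, zero_le_one⟩ ha))

lemma cdf_mono {f : ℝ → ℝ} (hI : IntervalIntegrable (fun x => |deriv f x|) volume 0 1) :
    MonotoneOn (cdfOf f) (Icc 0 1) := by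
  intro a ha b hb hab
  have h1 := cdf_sub hI ha hb
  have h2 : 0 ≤ ∫ x in a..b, |deriv f x| :=
    intervalIntegral.integral_nonneg hab (fun x _ => abs_nonneg _)
  nlinarith [inv_nonneg.2 (normD1_nonneg f)]

lemma cdf_zero (f : ℝ → ℝ) : cdfOf f 0 = 0 := by simp [cdfOf]

lemma cdf_one {f : ℝ → ℝ} (h : 0 < normD1 f) : cdfOf f 1 = 1 := by
  rw [cdfOf, ← normD1, inv_mul_cancel₀ h.ne']

lemma cdf_contOn {f : ℝ → ℝ} (hI : IntervalIntegrable (fun x => |deriv f x|) volume 0 1) :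
    ContinuousOn (cdfOf f) (Icc 0 1) := by
  have h := intervalIntegral.continuousOn_primitive_interval' hI
    (by rw [uIcc_of_le zero_le_one]; exact ⟨le_rfl, zero_le_one⟩)
  rw [uIcc_of_le zero_le_one] at h
  unfold cdfOf
  exact continuousOn_const.mul h

lemma cdf_hasDeriv {f : ℝ → ℝ} (hI : IntervalIntegrable (fun x => |deriv f x|) volume 0 1)
    {p : ℝ} (hp : p ∈ Icc (0:ℝ) 1) (hc : ContinuousAt (deriv f) p) :
    HasDerivAt (cdfOf f) ((normD1 f)⁻¹ * |deriv f p|) p := by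
  have h1 : IntervalIntegrable (fun x => |deriv f x|) volume 0 p :=
    hI.mono_set (sub_uIcc ⟨le_rfl, zero_le_one⟩ hp)
  have h2 : HasDerivAt (fun u => ∫ x in (0:ℝ)..u, |deriv f x|) (|deriv f p|) p :=
    intervalIntegral.integral_hasDerivAt_right h1
      ((measurable_deriv f).abs.stronglyMeasurable.stronglyMeasurableAtFilter) hc.abs
  exact h2.const_mul _

lemma deriv_nonneg_of_mono {g : ℝ → ℝ} {u d : ℝ} (hm : MonotoneOn g (Icc 0 1))
    (hu : u ∈ Ioo (0:ℝ) 1) (hd : HasDerivAt g d u) : 0 ≤ d := by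
  have hne : (𝓝[Ioo u 1] u).NeBot := by
    refine mem_closure_iff_nhdsWithin_neBot.1 ?_
    rw [closure_Ioo (ne_of_lt hu.2)]
    exact ⟨le_rfl, hu.2.le⟩
  have ht : Filter.Tendsto (slope g u) (𝓝[Ioo u 1] u) (𝓝 d) :=
    (hasDerivAt_iff_tendsto_slope.1 hd).mono_left
      (nhdsWithin_mono u (fun v hv => ne_of_gt hv.1))
  refine ge_of_tendsto ht ?_
  filter_upwards [self_mem_nhdsWithin] with v hv
  rw [slope_def_field]
  have h1 : g u ≤ g v := hm ⟨hu.1.le, hu.2.le⟩ ⟨hu.1.le.trans hv.1.le, hv.2.le⟩ hv.1.le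
  have h2 : 0 < v - u := by linarith [hv.1]
  exact div_nonneg (by linarith) h2.le

lemma locally_const_of_not_endpoints {g : ℝ → ℝ} (hm : MonotoneOn g (Icc 0 1))
    {u : ℝ} (hu : u ∈ Icc (0:ℝ) 1)
    (hA : u ≠ sInf {v ∈ Icc (0:ℝ) 1 | g v = g u})
    (hB : u ≠ sSup {v ∈ Icc (0:ℝ) 1 | g v = g u}) :
    ∃ ε > 0, ∀ v ∈ Ioo (u - ε) (u + ε), g v = g u := by
  set P := {v ∈ Icc (0:ℝ) 1 | g v = g u} with hP
  have hne : P.Nonempty := ⟨u, hu, rfl⟩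
  have hbdd : BddBelow P := ⟨0, fun v hv => hv.1.1⟩
  have hbdd' : BddAbove P := ⟨1, fun v hv => hv.1.2⟩
  have hα : sInf P ≤ u := csInf_le hbdd ⟨hu, rfl⟩
  have hβ : u ≤ sSup P := le_csSup hbdd' ⟨hu, rfl⟩
  have hαu : sInf P < u := lt_of_le_of_ne hα (fun h => hA h.symm)
  have huβ : u < sSup P := hβ.lt_of_ne hB
  refine ⟨min (u - sInf P) (sSup P - u), lt_min (by linarith) (by linarith), ?_⟩
  intro v hv
  have hv1 : sInf P < v := by
    have := hv.1
    have h' : min (u - sInf P) (sSup P - u) ≤ u - sInf P := min_le_left _ _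
    linarith
  have hv2 : v < sSup P := by
    have := hv.2
    have h' : min (u - sInf P) (sSup P - u) ≤ sSup P - u := min_le_right _ _
    linarith
  obtain ⟨v₁, hv₁P, hv₁⟩ := exists_lt_of_csInf_lt hne hv1
  obtain ⟨v₂, hv₂P, hv₂⟩ := exists_lt_of_lt_csSup hne hv2
  have hvIcc : v ∈ Icc (0:ℝ) 1 := ⟨hv₁P.1.1.trans hv₁.le, hv₂.le.trans hv₂P.1.2⟩
  have h1 : g v₁ ≤ g v := hm hv₁P.1 hvIcc hv₁.le
  have h2 : g v ≤ g v₂ := hm hvIcc hv₂P.1 hv₂.le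
  rw [hv₁P.2] at h1
  rw [hv₂P.2] at h2
  exact le_antisymm h2 h1

lemma cdf_eq_of_const {f : ℝ → ℝ} (hI : IntervalIntegrable (fun x => |deriv f x|) volume 0 1)
    {a b : ℝ} (ha : a ∈ Icc (0:ℝ) 1) (hb : b ∈ Icc (0:ℝ) 1) (hab : a ≤ b)
    (hconst : ∀ w ∈ Icc a b, f w = f a) :
    cdfOf f b = cdfOf f a := by
  have hderiv : ∀ w ∈ Ioo a b, deriv f w = 0 := by
    intro w hw
    have hev : f =ᶠ[𝓝 w] fun _ => f a := by
      filter_upwards [Ioo_mem_nhds hw.1 hw.2] with z hz using hconst z ⟨hz.1.le, hz.2.le⟩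
    rw [hev.deriv_eq, deriv_const]
  have hzero : ∫ x in a..b, |deriv f x| = 0 := by
    rw [intervalIntegral.integral_of_le hab, MeasureTheory.integral_Ioc_eq_integral_Ioo,
      MeasureTheory.setIntegral_congr_fun measurableSet_Ioo
        (fun w hw => by rw [hderiv w hw, abs_zero] : EqOn _ (fun _ => (0:ℝ)) _)]
    simp
  have h := cdf_sub hI ha hb
  rw [hzero, mul_zero] at h
  linarith

lemma flat_side {s φ g₁ g₂ : ℝ → ℝ}
    (heq : ∀ v ∈ Icc (0:ℝ) 1, s (g₁ v) = φ (g₂ v))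
    (hg₂m : MonotoneOn g₂ (Icc 0 1)) (hg₂c : ContinuousOn g₂ (Icc 0 1))
    (hg₂map : MapsTo g₂ (Icc (0:ℝ) 1) (Icc (0:ℝ) 1))
    (hIφ : IntervalIntegrable (fun x => |deriv φ x|) volume 0 1)
    {u : ℝ} (hu : u ∈ Ioo (0:ℝ) 1)
    {ε : ℝ} (hε : 0 < ε) (hflat : ∀ v ∈ Ioo (u - ε) (u + ε), g₁ v = g₁ u) :
    HasDerivAt (fun v => cdfOf s (g₁ v)) 0 u ∧ HasDerivAt (fun v => cdfOf φ (g₂ v)) 0 u := by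
  set ε' := min ε (min u (1 - u)) with hε'def
  have hε' : 0 < ε' := lt_min hε (lt_min hu.1 (by linarith [hu.2]))
  have hε'1 : ε' ≤ ε := min_le_left _ _
  have hε'2 : ε' ≤ u := (min_le_right _ _).trans (min_le_left _ _)
  have hε'3 : ε' ≤ 1 - u := (min_le_right _ _).trans (min_le_right _ _)
  have hsub : Ioo (u - ε') (u + ε') ⊆ Icc (0:ℝ) 1 := by
    intro v hv
    constructor <;> [linarith [hv.1]; linarith [hv.2]]
  have hsubε : Ioo (u - ε') (u + ε') ⊆ Ioo (u - ε) (u + ε) :=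
    Ioo_subset_Ioo (by linarith) (by linarith)
  have hmem : Ioo (u - ε') (u + ε') ∈ 𝓝 u := Ioo_mem_nhds (by linarith) (by linarith)
  have huI : u ∈ Icc (0:ℝ) 1 := ⟨hu.1.le, hu.2.le⟩
  constructor
  · apply (hasDerivAt_const u (cdfOf s (g₁ u))).congr_of_eventuallyEq
    filter_upwards [hmem] with v hv
    rw [hflat v (hsubε hv)]
  · apply (hasDerivAt_const u (cdfOf φ (g₂ u))).congr_of_eventuallyEq
    filter_upwards [hmem] with v hv
    have hvI : v ∈ Icc (0:ℝ) 1 := hsub hv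
    rcases le_total u v with hle | hle
    · have hconst : ∀ w ∈ Icc (g₂ u) (g₂ v), φ w = φ (g₂ u) := by
        intro w hw
        obtain ⟨r, hr, hrw⟩ :=
          intermediate_value_Icc hle (hg₂c.mono (Icc_subset_Icc huI.1 hvI.2)) hw
        have hrI : r ∈ Icc (0:ℝ) 1 := ⟨huI.1.trans hr.1, hr.2.trans hvI.2⟩
        have hrflat : g₁ r = g₁ u := hflat r (hsubε ⟨by linarith [hr.1, hv.1], by linarith [hr.2, hv.2]⟩)
        calc φ w = φ (g₂ r) := by rw [hrw]
          _ = s (g₁ r) := (heq r hrI).symm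
          _ = s (g₁ u) := by rw [hrflat]
          _ = φ (g₂ u) := heq u huI
      exact cdf_eq_of_const hIφ (hg₂map huI) (hg₂map hvI) (hg₂m huI hvI hle) hconst
    · have hconst : ∀ w ∈ Icc (g₂ v) (g₂ u), φ w = φ (g₂ v) := by
        intro w hw
        obtain ⟨r, hr, hrw⟩ :=
          intermediate_value_Icc hle (hg₂c.mono (Icc_subset_Icc hvI.1 huI.2)) hw
        have hrI : r ∈ Icc (0:ℝ) 1 := ⟨hvI.1.trans hr.1, hr.2.trans huI.2⟩
        have hrflat : g₁ r = g₁ u := hflat r (hsubε ⟨by linarith [hr.1, hv.1], by linarith [hr.2, hv.2]⟩)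
        have hvflat : g₁ v = g₁ u := hflat v (hsubε hv)
        calc φ w = φ (g₂ r) := by rw [hrw]
          _ = s (g₁ r) := (heq r hrI).symm
          _ = s (g₁ v) := by rw [hrflat, ← hvflat]
          _ = φ (g₂ v) := heq v hvI
      exact (cdf_eq_of_const hIφ (hg₂map hvI) (hg₂map huI) (hg₂m hvI huI hle) hconst).symm

lemma mapsTo_of_InG {g : ℝ → ℝ} (hg : InG g) : MapsTo g (Icc (0:ℝ) 1) (Icc (0:ℝ) 1) := by
  obtain ⟨_, hm, h0, h1⟩ := hg
  intro v hv
  constructor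
  · rw [← h0]; exact hm ⟨le_rfl, zero_le_one⟩ hv hv.1
  · rw [← h1]; exact hm hv ⟨zero_le_one, le_rfl⟩ hv.2

lemma cdf_warp_eq {s φ g₁ g₂ : ℝ → ℝ}
    (hs : C1FF s) (hφ : C1FF φ) (hns : 0 < normD1 s) (hnφ : 0 < normD1 φ)
    (hg₁ : InG g₁) (hg₂ : InG g₂)
    (heq : ∀ v ∈ Icc (0:ℝ) 1, s (g₁ v) = φ (g₂ v)) :
    ∀ u ∈ Icc (0:ℝ) 1, cdfOf s (g₁ u) = cdfOf φ (g₂ u) := by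
  classical
  have hIs := intervalIntegrable_of_normD1_pos hns
  have hIφ := intervalIntegrable_of_normD1_pos hnφ
  obtain ⟨⟨hscont, Ss, hsdiff, hsdc⟩, -⟩ := hs
  obtain ⟨⟨hφcont, Sφ, hφdiff, hφdc⟩, -⟩ := hφ
  have hg₁map := mapsTo_of_InG hg₁
  have hg₂map := mapsTo_of_InG hg₂
  obtain ⟨⟨⟨hg₁cont, S₁, hg₁diff, -⟩, -⟩, hg₁m, hg₁0, hg₁1⟩ := hg₁
  obtain ⟨⟨⟨hg₂cont, S₂, hg₂diff, -⟩, -⟩, hg₂m, hg₂0, hg₂1⟩ := hg₂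
  set cs := normD1 s
  set cφ := normD1 φ
  set h : ℝ → ℝ := fun v => cdfOf s (g₁ v) - cdfOf φ (g₂ v) with hdef
  set B : Finset ℝ := S₁ ∪ S₂ ∪
      ((Ss ∪ {0, 1}).image (fun p => sInf {v ∈ Icc (0:ℝ) 1 | g₁ v = p})) ∪
      ((Ss ∪ {0, 1}).image (fun p => sSup {v ∈ Icc (0:ℝ) 1 | g₁ v = p})) ∪
      ((Sφ ∪ {0, 1}).image (fun p => sInf {v ∈ Icc (0:ℝ) 1 | g₂ v = p})) ∪
      ((Sφ ∪ {0, 1}).image (fun p => sSup {v ∈ Icc (0:ℝ) 1 | g₂ v = p})) with hBdef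
  have claim : ∀ u ∈ Ioo (0:ℝ) 1 \ (B : Set ℝ),
      ∃ A, 0 ≤ A ∧ HasDerivAt h (A * (cs⁻¹ - cφ⁻¹)) u := by
    rintro u ⟨huIoo, huB⟩
    have huIcc : u ∈ Icc (0:ℝ) 1 := ⟨huIoo.1.le, huIoo.2.le⟩
    simp only [hBdef, Finset.coe_union, mem_union, Finset.mem_coe] at huB
    push_neg at huB
    obtain ⟨⟨⟨⟨⟨hu1, hu2⟩, hu3⟩, hu4⟩, hu5⟩, hu6⟩ := huB
    by_cases h1flat : ∃ ε > 0, ∀ v ∈ Ioo (u - ε) (u + ε), g₁ v = g₁ u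
    · obtain ⟨ε, hε, hflat⟩ := h1flat
      obtain ⟨hd1, hd2⟩ := flat_side heq hg₂m hg₂cont hg₂map hIφ huIoo hε hflat
      exact ⟨0, le_rfl, by have := hd1.sub hd2; rw [sub_zero] at this; rw [zero_mul]; exact this⟩
    by_cases h2flat : ∃ ε > 0, ∀ v ∈ Ioo (u - ε) (u + ε), g₂ v = g₂ u
    · obtain ⟨ε, hε, hflat⟩ := h2flat
      obtain ⟨hd2, hd1⟩ := flat_side (fun v hv => (heq v hv).symm) hg₁m hg₁cont hg₁map hIs
        huIoo hε hflat
      exact ⟨0, le_rfl, by have := hd1.sub hd2; rw [sub_zero] at this; rw [zero_mul]; exact this⟩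
    -- neither flat
    have hp1 : g₁ u ∉ (Ss : Set ℝ) ∪ {0, 1} := by
      intro hp
      apply h1flat
      have hpF : g₁ u ∈ Ss ∪ ({0, 1} : Finset ℝ) := by
        rcases hp with hp | hp
        · exact Finset.mem_union_left _ hp
        · apply Finset.mem_union_right
          simp only [Finset.mem_insert, Finset.mem_singleton]
          simpa using hp
      apply locally_const_of_not_endpoints hg₁m huIcc
      · intro hEq
        exact hu3 (Finset.mem_image.2 ⟨g₁ u, hpF, hEq.symm⟩)
      · intro hEq
        exact hu4 (Finset.mem_image.2 ⟨g₁ u, hpF, hEq.symm⟩)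
    have hp2 : g₂ u ∉ (Sφ : Set ℝ) ∪ {0, 1} := by
      intro hp
      apply h2flat
      have hpF : g₂ u ∈ Sφ ∪ ({0, 1} : Finset ℝ) := by
        rcases hp with hp | hp
        · exact Finset.mem_union_left _ hp
        · apply Finset.mem_union_right
          simp only [Finset.mem_insert, Finset.mem_singleton]
          simpa using hp
      apply locally_const_of_not_endpoints hg₂m huIcc
      · intro hEq
        exact hu5 (Finset.mem_image.2 ⟨g₂ u, hpF, hEq.symm⟩)
      · intro hEq
        exact hu6 (Finset.mem_image.2 ⟨g₂ u, hpF, hEq.symm⟩)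
    simp only [Set.mem_union, not_or] at hp1 hp2
    have hq1 : g₁ u ∈ Ioo (0:ℝ) 1 \ (Ss : Set ℝ) := by
      have hmem := hg₁map huIcc
      have h0 : g₁ u ≠ 0 := fun hc => hp1.2 (by simp [hc])
      have h1 : g₁ u ≠ 1 := fun hc => hp1.2 (by simp [hc])
      exact ⟨⟨hmem.1.lt_of_ne (Ne.symm h0), hmem.2.lt_of_ne h1⟩, hp1.1⟩
    have hq2 : g₂ u ∈ Ioo (0:ℝ) 1 \ (Sφ : Set ℝ) := by
      have hmem := hg₂map huIcc
      have h0 : g₂ u ≠ 0 := fun hc => hp2.2 (by simp [hc])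
      have h1 : g₂ u ≠ 1 := fun hc => hp2.2 (by simp [hc])
      exact ⟨⟨hmem.1.lt_of_ne (Ne.symm h0), hmem.2.lt_of_ne h1⟩, hp2.1⟩
    have hd1 : HasDerivAt g₁ (deriv g₁ u) u := (hg₁diff u ⟨huIcc, hu1⟩).hasDerivAt
    have hd2 : HasDerivAt g₂ (deriv g₂ u) u := (hg₂diff u ⟨huIcc, hu2⟩).hasDerivAt
    have hd1n : 0 ≤ deriv g₁ u := deriv_nonneg_of_mono hg₁m huIoo hd1
    have hd2n : 0 ≤ deriv g₂ u := deriv_nonneg_of_mono hg₂m huIoo hd2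
    have hnhds1 : Icc (0:ℝ) 1 \ (Ss : Set ℝ) ∈ 𝓝 (g₁ u) := by
      rw [mem_nhds_iff]
      exact ⟨Ioo 0 1 \ (Ss : Set ℝ),
        fun y hy => ⟨⟨hy.1.1.le, hy.1.2.le⟩, hy.2⟩,
        isOpen_Ioo.sdiff (Ss.finite_toSet.isClosed), hq1⟩
    have hnhds2 : Icc (0:ℝ) 1 \ (Sφ : Set ℝ) ∈ 𝓝 (g₂ u) := by
      rw [mem_nhds_iff]
      exact ⟨Ioo 0 1 \ (Sφ : Set ℝ),
        fun y hy => ⟨⟨hy.1.1.le, hy.1.2.le⟩, hy.2⟩,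
        isOpen_Ioo.sdiff (Sφ.finite_toSet.isClosed), hq2⟩
    have hcs : ContinuousAt (deriv s) (g₁ u) := hsdc.continuousAt hnhds1
    have hcφ : ContinuousAt (deriv φ) (g₂ u) := hφdc.continuousAt hnhds2
    have hg₁uI : g₁ u ∈ Icc (0:ℝ) 1 := hg₁map huIcc
    have hg₂uI : g₂ u ∈ Icc (0:ℝ) 1 := hg₂map huIcc
    have hF1 : HasDerivAt (fun v => cdfOf s (g₁ v)) (cs⁻¹ * |deriv s (g₁ u)| * deriv g₁ u) u := by
      have := (cdf_hasDeriv hIs hg₁uI hcs).comp u hd1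
      exact this
    have hG1 : HasDerivAt (fun v => cdfOf φ (g₂ v)) (cφ⁻¹ * |deriv φ (g₂ u)| * deriv g₂ u) u := by
      have := (cdf_hasDeriv hIφ hg₂uI hcφ).comp u hd2
      exact this
    have hsg : HasDerivAt (fun v => s (g₁ v)) (deriv s (g₁ u) * deriv g₁ u) u := by
      have := ((hsdiff (g₁ u) ⟨hg₁uI, hq1.2⟩).hasDerivAt).comp u hd1
      exact this
    have hφg : HasDerivAt (fun v => φ (g₂ v)) (deriv φ (g₂ u) * deriv g₂ u) u := by
      have := ((hφdiff (g₂ u) ⟨hg₂uI, hq2.2⟩).hasDerivAt).comp u hd2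
      exact this
    have heqev : (fun v => s (g₁ v)) =ᶠ[𝓝 u] (fun v => φ (g₂ v)) := by
      filter_upwards [Icc_mem_nhds huIoo.1 huIoo.2] with v hv using heq v hv
    have hkey : deriv s (g₁ u) * deriv g₁ u = deriv φ (g₂ u) * deriv g₂ u := by
      have h1 : HasDerivAt (fun v => φ (g₂ v)) (deriv s (g₁ u) * deriv g₁ u) u :=
        hsg.congr_of_eventuallyEq heqev.symm
      exact h1.unique hφg
    refine ⟨|deriv s (g₁ u)| * deriv g₁ u, mul_nonneg (abs_nonneg _) hd1n, ?_⟩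
    have habs : |deriv s (g₁ u)| * deriv g₁ u = |deriv φ (g₂ u)| * deriv g₂ u := by
      have h1 : |deriv s (g₁ u) * deriv g₁ u| = |deriv φ (g₂ u) * deriv g₂ u| := by rw [hkey]
      rwa [abs_mul, abs_mul, abs_of_nonneg hd1n, abs_of_nonneg hd2n] at h1
    have hres := hF1.sub hG1
    have hres' : HasDerivAt h (cs⁻¹ * |deriv s (g₁ u)| * deriv g₁ u -
        cφ⁻¹ * |deriv φ (g₂ u)| * deriv g₂ u) u := hres
    convert hres' using 1
    linear_combination (-cφ⁻¹) * habs
  -- now the monotonicity wrap-up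
  have hhcont : ContinuousOn h (Icc 0 1) := by
    apply ContinuousOn.sub
    · exact (cdf_contOn hIs).comp hg₁cont hg₁map
    · exact (cdf_contOn hIφ).comp hg₂cont hg₂map
  have hh0 : h 0 = 0 := by simp [hdef, hg₁0, hg₂0, cdf_zero]
  have hh1 : h 1 = 0 := by simp [hdef, hg₁1, hg₂1, cdf_one hns, cdf_one hnφ]
  have hmain : ∀ u ∈ Icc (0:ℝ) 1, h u = 0 := by
    intro u hu
    rcases le_or_gt 0 (cs⁻¹ - cφ⁻¹) with hδ | hδ
    · have hm := monoAux B 0 1 h hhcont (fun x hx => by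
        obtain ⟨A, hA, hd⟩ := claim x hx
        exact ⟨A * (cs⁻¹ - cφ⁻¹), mul_nonneg hA hδ, hd⟩)
      have e1 := hm ⟨le_rfl, zero_le_one⟩ hu hu.1
      have e2 := hm hu ⟨zero_le_one, le_rfl⟩ hu.2
      rw [hh0] at e1; rw [hh1] at e2
      linarith
    · have hm := monoAux B 0 1 (fun v => -h v) hhcont.neg (fun x hx => by
        obtain ⟨A, hA, hd⟩ := claim x hx
        exact ⟨A * (cφ⁻¹ - cs⁻¹), mul_nonneg hA (by linarith), by
          have := hd.neg
          have this' : HasDerivAt (fun v => -h v) (-(A * (cs⁻¹ - cφ⁻¹))) x := this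
          convert this' using 1
          ring⟩)
      have e1 := hm ⟨le_rfl, zero_le_one⟩ hu hu.1
      have e2 := hm hu ⟨zero_le_one, le_rfl⟩ hu.2
      simp only [hh0, hh1, neg_zero] at e1 e2
      linarith [e1, e2]
  intro u hu
  have := hmain u hu
  simp only [hdef] at this
  linarith

lemma warp_transport_eq {s φ : ℝ → ℝ} (hs : C1FF s) (hφ : C1FF φ)
    (hns : 0 < normD1 s) (hnφ : 0 < normD1 φ) (h : WarpRel s φ) :
    ∀ x ∈ Icc (0:ℝ) 1, s x = φ (transportMap s φ x) := by
  classical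
  obtain ⟨g₁, g₂, hg₁, hg₂, heq⟩ := h
  have hIs := intervalIntegrable_of_normD1_pos hns
  have hIφ := intervalIntegrable_of_normD1_pos hnφ
  have hcdf := cdf_warp_eq hs hφ hns hnφ hg₁ hg₂ heq
  have hg₂map := mapsTo_of_InG hg₂
  have hg₁cont : ContinuousOn g₁ (Icc 0 1) := hg₁.1.1.1
  have hg₁0 : g₁ 0 = 0 := hg₁.2.2.1
  have hg₁1 : g₁ 1 = 1 := hg₁.2.2.2
  intro x hx
  obtain ⟨u, hu, hgu⟩ : ∃ u ∈ Icc (0:ℝ) 1, g₁ u = x := by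
    have hIV := intermediate_value_Icc (zero_le_one) hg₁cont
    rw [hg₁0, hg₁1] at hIV
    obtain ⟨u, hu, hgu⟩ := hIV hx
    exact ⟨u, hu, hgu⟩
  have hy₂I : g₂ u ∈ Icc (0:ℝ) 1 := hg₂map hu
  have hFG : cdfOf s x = cdfOf φ (g₂ u) := by rw [← hgu]; exact hcdf u hu
  have hGm : MonotoneOn (cdfOf φ) (Icc 0 1) := cdf_mono hIφ
  set E : Set ℝ := {z ∈ Icc (0:ℝ) 1 | cdfOf s x < cdfOf φ z} ∪ {1} with hEdef
  have htm : transportMap s φ x = sInf E := rfl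
  have hne : E.Nonempty := ⟨1, Or.inr rfl⟩
  have hlow : ∀ z ∈ E, g₂ u ≤ z := by
    rintro z (⟨hzI, hz⟩ | rfl)
    · by_contra hzc
      push_neg at hzc
      have := hGm hzI hy₂I hzc.le
      rw [← hFG] at this
      linarith
    · exact hy₂I.2
  have hyg : g₂ u ≤ sInf E := le_csInf hne hlow
  have hbdd : BddBelow E := ⟨g₂ u, hlow⟩
  have hg1 : sInf E ≤ 1 := csInf_le hbdd (Or.inr rfl)
  have hgI : sInf E ∈ Icc (0:ℝ) 1 := ⟨hy₂I.1.trans hyg, hg1⟩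
  have hGconst : ∀ z ∈ Ico (g₂ u) (sInf E), cdfOf φ z = cdfOf φ (g₂ u) := by
    intro z hz
    have hzE : z ∉ E := fun hzE => absurd (csInf_le hbdd hzE) (not_le.2 hz.2)
    have hzI : z ∈ Icc (0:ℝ) 1 := ⟨hy₂I.1.trans hz.1, hz.2.le.trans hg1⟩
    have h1 : ¬ (cdfOf s x < cdfOf φ z) := fun hc => hzE (Or.inl ⟨hzI, hc⟩)
    push_neg at h1
    rw [hFG] at h1
    exact le_antisymm h1 (hGm hy₂I hzI hz.1)
  have hGgx : cdfOf φ (sInf E) = cdfOf φ (g₂ u) := by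
    rcases eq_or_lt_of_le hyg with heq' | hlt
    · rw [← heq']
    · have hcl : sInf E ∈ closure (Ico (g₂ u) (sInf E)) := by
        rw [closure_Ico (ne_of_lt hlt)]
        exact ⟨hyg, le_rfl⟩
      have hnb : (𝓝[Ico (g₂ u) (sInf E)] (sInf E)).NeBot :=
        mem_closure_iff_nhdsWithin_neBot.1 hcl
      have ht1 : Tendsto (cdfOf φ) (𝓝[Ico (g₂ u) (sInf E)] (sInf E)) (𝓝 (cdfOf φ (sInf E))) :=
        ((cdf_contOn hIφ) (sInf E) hgI).mono
          (fun z hz => ⟨hy₂I.1.trans hz.1, hz.2.le.trans hg1⟩)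
      have ht2 : Tendsto (cdfOf φ) (𝓝[Ico (g₂ u) (sInf E)] (sInf E)) (𝓝 (cdfOf φ (g₂ u))) := by
        apply Tendsto.congr' _ tendsto_const_nhds
        filter_upwards [self_mem_nhdsWithin] with z hz using (hGconst z hz).symm
      exact tendsto_nhds_unique ht1 ht2
  have hint : ∫ w in (g₂ u)..(sInf E), |deriv φ w| = 0 := by
    have hsub := cdf_sub hIφ hy₂I hgI
    rw [hGgx, sub_self] at hsub
    rcases mul_eq_zero.1 hsub.symm with hq | hq
    · exact absurd hq (inv_ne_zero hnφ.ne')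
    · exact hq
  have hφconst : φ (sInf E) = φ (g₂ u) := by
    obtain ⟨⟨hφcont, Sφ, hφdiff, hφdc⟩, -⟩ := hφ
    have hii : IntegrableOn (fun w => |deriv φ w|) (Ioc (g₂ u) (sInf E)) volume :=
      (intervalIntegrable_iff_integrableOn_Ioc_of_le hyg).1
        (hIφ.mono_set (sub_uIcc hy₂I hgI))
    have hae : ∀ᵐ w ∂(volume.restrict (Ioc (g₂ u) (sInf E))), |deriv φ w| = 0 := by
      have hint' : ∫ w in Ioc (g₂ u) (sInf E), |deriv φ w| = 0 := by
        rw [← intervalIntegral.integral_of_le hyg]; exact hint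
      have h0 := (MeasureTheory.integral_eq_zero_iff_of_nonneg
        (fun w => abs_nonneg _) hii).1 hint'
      filter_upwards [h0] with w hw using hw
    have hderiv0 : ∀ w ∈ Ioo (g₂ u) (sInf E) \ (Sφ : Set ℝ), HasDerivAt φ 0 w := by
      rintro w ⟨hw, hwS⟩
      have hwI : w ∈ Icc (0:ℝ) 1 := ⟨hy₂I.1.trans hw.1.le, hw.2.le.trans hg1⟩
      have hda : DifferentiableAt ℝ φ w := hφdiff w ⟨hwI, hwS⟩
      have hopen : IsOpen (Ioo (g₂ u) (sInf E) \ (Sφ : Set ℝ)) :=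
        isOpen_Ioo.sdiff (Sφ.finite_toSet.isClosed)
      have hcw : ContinuousAt (deriv φ) w := by
        apply hφdc.continuousAt
        rw [mem_nhds_iff]
        exact ⟨Ioo (g₂ u) (sInf E) \ (Sφ : Set ℝ),
          fun y hy => ⟨⟨hy₂I.1.trans hy.1.1.le, hy.1.2.le.trans hg1⟩, hy.2⟩, hopen, hw, hwS⟩
      have hz : deriv φ w = 0 := by
        by_contra hne0
        have hpos : 0 < |deriv φ w| := abs_pos.2 hne0
        have hev : ∀ᶠ z in 𝓝 w, |deriv φ w| / 2 < |deriv φ z| :=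
          hcw.abs.eventually (eventually_gt_nhds (by linarith))
        have hev2 : ∀ᶠ z in 𝓝 w, z ∈ Ioo (g₂ u) (sInf E) := Ioo_mem_nhds hw.1 hw.2
        obtain ⟨δ, hδ, hball⟩ := Metric.eventually_nhds_iff_ball.1 (hev.and hev2)
        have hsubball : Ioo (w - δ) (w + δ) ⊆
            {z | ¬ |deriv φ z| = 0} ∩ Ioc (g₂ u) (sInf E) := by
          intro z hz'
          have hz'' := hball z (by rw [Real.ball_eq_Ioo]; exact hz')
          exact ⟨by intro hc; rw [hc] at hz''; linarith [hz''.1], hz''.2.1, hz''.2.2.le⟩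
        have hm0 := ae_iff.1 hae
        have hlem : volume.restrict (Ioc (g₂ u) (sInf E)) (Ioo (w - δ) (w + δ)) ≤ 0 := by
          rw [← hm0]
          exact measure_mono (fun z hz' => (hsubball hz').1)
        have hle := le_antisymm hlem (zero_le)
        rw [Measure.restrict_apply measurableSet_Ioo,
          inter_eq_self_of_subset_left (fun z hz' => (hsubball hz').2),
          Real.volume_Ioo] at hle
        rw [ENNReal.ofReal_eq_zero] at hle
        linarith
      rw [← hz]
      exact hda.hasDerivAt
    have := constAux Sφ hyg (hφcont.mono (Icc_subset_Icc hy₂I.1 hg1)) hderiv0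
      (sInf E) ⟨hyg, le_rfl⟩
    exact this
  calc s x = s (g₁ u) := by rw [hgu]
    _ = φ (g₂ u) := heq u hu
    _ = φ (sInf E) := hφconst.symm
    _ = φ (transportMap s φ x) := by rw [htm]

/-- if `s ∼ t₀`, then `d_T(s, t₀) = 0` and `t₀` attains the minimum of
`d_T(s, ·)` over the training samples `t₀, …, t_n`. -/
theorem dT_nearest_neighbor (n : ℕ) (s : ℝ → ℝ) (t : ℕ → ℝ → ℝ)
    (hs : C1FF s) (hns : 0 < normD1 s)
    (ht : ∀ j ≤ n, C1FF (t j)) (hnt : ∀ j ≤ n, 0 < normD1 (t j))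
    (h0 : WarpRel s (t 0)) :
    dT s (t 0) = 0 ∧ ∀ j ≤ n, dT s (t 0) ≤ dT s (t j) := by
  have hφ := ht 0 (Nat.zero_le n)
  have hnφ := hnt 0 (Nat.zero_le n)
  have hkey := warp_transport_eq hs hφ hns hnφ h0
  have hzero : dT s (t 0) = 0 := by
    unfold dT
    have hEq : Set.EqOn (fun x => |s x - (t 0) (transportMap s (t 0) x)| ^ 2 *
        Real.sqrt (deriv (transportMap s (t 0)) x)) (fun _ => (0:ℝ)) (Set.uIcc (0:ℝ) 1) := by
      intro x hx
      rw [Set.uIcc_of_le zero_le_one] at hx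
      simp [hkey x hx]
    rw [intervalIntegral.integral_congr hEq]
    simp
  exact ⟨hzero, fun j _ => hzero ▸ Real.sqrt_nonneg _⟩
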